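/- With $u$ as the linearized measure of the superlevel sets of the Green function, one has $\mathbb{E}_o(\tau_A) = \sum_{x\in A} m(x)G^A(x) \le 2\int_0^\infty u(s)\,ds$. -/

import Mathlib

open scoped Classical BigOperators
open MeasureTheory

noncomputable def kerPow {V : Type*} (q : V → V → ℝ) : ℕ → V → V → ℝ
  | 0 => fun x y => if x = y then 1 else 0
  | n + 1 => fun x y => ∑' z, kerPow q n x z * q z y

lemma kerPow_nonneg {V : Type*} {q : V → V → ℝ} (hq : ∀ x y, 0 ≤ q x y) :
    ∀ k x y, 0 ≤ kerPow q k x y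
  | 0, x, y => by simp only [kerPow]; positivity
  | (n+1), x, y => by
      simp only [kerPow]
      exact tsum_nonneg fun z => mul_nonneg (kerPow_nonneg hq n x z) (hq z y)

lemma kerPow_row_summable {V : Type*} {q : V → V → ℝ} (hq : ∀ x y, 0 ≤ q x y)
    (hqs : ∀ x, Summable (q x)) (hq1 : ∀ x, ∑' y, q x y ≤ 1) (o : V) :
    ∀ k, Summable fun x => kerPow q k o x
  | 0 => by
      refine summable_of_ne_finset_zero (s := {o}) fun x hx => ?_
      simp only [kerPow]
      rw [if_neg]
      intro h; exact hx (by simp [h])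
  | (n+1) => by
      have hb := kerPow_row_summable hq hqs hq1 o n
      have hb0 : ∀ z, 0 ≤ kerPow q n o z := fun z => kerPow_nonneg hq n o z
      have hq01 : ∀ z y, q z y ≤ 1 := fun z y =>
        le_trans ((hqs z).le_tsum y fun j _ => hq z j) (hq1 z)
      have hzsum : ∀ y, Summable fun z => kerPow q n o z * q z y := fun y =>
        Summable.of_nonneg_of_le (fun z => mul_nonneg (hb0 z) (hq z y))
          (fun z => mul_le_of_le_one_right (hb0 z) (hq01 z y)) hb
      have key : (∑' y, ENNReal.ofReal (∑' z, kerPow q n o z * q z y)) ≠ ⊤ := by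
        have hle : (∑' y, ENNReal.ofReal (∑' z, kerPow q n o z * q z y))
            ≤ ENNReal.ofReal (∑' z, kerPow q n o z) := by
          calc ∑' y, ENNReal.ofReal (∑' z, kerPow q n o z * q z y)
              = ∑' (y) (z), ENNReal.ofReal (kerPow q n o z * q z y) := by
                refine tsum_congr fun y => ?_
                exact ENNReal.ofReal_tsum_of_nonneg
                  (fun z => mul_nonneg (hb0 z) (hq z y)) (hzsum y)
            _ = ∑' (z) (y), ENNReal.ofReal (kerPow q n o z * q z y) := ENNReal.tsum_comm
            _ = ∑' z, ENNReal.ofReal (kerPow q n o z) * ∑' y, ENNReal.ofReal (q z y) := by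
                refine tsum_congr fun z => ?_
                simp_rw [ENNReal.ofReal_mul (hb0 z)]
                exact ENNReal.tsum_mul_left
            _ ≤ ∑' z, ENNReal.ofReal (kerPow q n o z) * 1 := by
                refine ENNReal.tsum_le_tsum fun z => mul_le_mul_right ?_ _
                rw [← ENNReal.ofReal_tsum_of_nonneg (fun y => hq z y) (hqs z)]
                exact ENNReal.ofReal_le_one.mpr (hq1 z)
            _ = ENNReal.ofReal (∑' z, kerPow q n o z) := by
                simp_rw [mul_one]
                exact (ENNReal.ofReal_tsum_of_nonneg hb0 hb).symm
        exact ne_top_of_le_ne_top ENNReal.ofReal_ne_top hle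
      have hsum := ENNReal.summable_toReal key
      refine hsum.congr fun y => ?_
      show (ENNReal.ofReal (∑' z, kerPow q n o z * q z y)).toReal = kerPow q (n+1) o y
      rw [ENNReal.toReal_ofReal (tsum_nonneg fun z => mul_nonneg (hb0 z) (hq z y))]
      rfl

/-- `E_o(τ_A) = ∑_{x ∈ A} m(x) G^A(x) ≤ 2 ∫_0^∞ u(s) ds`, where `u` is the
linearized measure of the superlevel sets of the killed Green function. -/
theorem statement7 {V : Type*} [Countable V]
    (p : V → V → ℝ) (m : V → ℝ)
    (hp : ∀ x y, 0 ≤ p x y) (hstoch : ∀ x, ∑' y, p x y = 1)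
    (hm : ∀ x, 0 < m x) (hrev : ∀ x y, m x * p x y = m y * p y x)
    (A : Set V) (o : V) (ho : o ∈ A)
    (pA : V → V → ℝ) (hpA : ∀ x y, pA x y = if x ∈ A then p x y else 0)
    (GA : V → ℝ)
    (hGA : ∀ x, GA x = if x ∈ A then (∑' k : ℕ, kerPow pA k o x) / m x else 0)
    (hGfin : ∀ x, Summable fun k : ℕ => kerPow pA k o x)
    (Etau : ℝ)
    (hEtau : Etau = ∑' k : ℕ, ∑' x : V, if x ∈ A then kerPow pA k o x else 0)
    (hEsum : Summable fun k : ℕ => ∑' x : V, if x ∈ A then kerPow pA k o x else 0)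
    (hGsum : Summable fun x : V => if x ∈ A then m x * GA x else 0)
    (u : ℝ → ℝ)
    (hu : ∀ s, u s = ∑' xy : V × V,
      if xy.1 ∈ A ∧ s ≤ GA xy.1 then
        m xy.1 * p xy.1 xy.2 *
          (if s ≤ GA xy.2 then 1
           else (GA xy.1 - max s (GA xy.2)) / (GA xy.1 - GA xy.2))
      else 0)
    (hu_sum : ∀ s, Summable fun xy : V × V =>
      if xy.1 ∈ A ∧ s ≤ GA xy.1 then
        m xy.1 * p xy.1 xy.2 *
          (if s ≤ GA xy.2 then 1
           else (GA xy.1 - max s (GA xy.2)) / (GA xy.1 - GA xy.2))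
      else 0)
    (hu_int : IntegrableOn u (Set.Ioi (0 : ℝ))) :
    Etau = (∑' x : V, if x ∈ A then m x * GA x else 0) ∧
      Etau ≤ 2 * ∫ s in Set.Ioi (0 : ℝ), u s := by
  -- basic facts
  have hpsum : ∀ x, Summable (p x) := by
    intro x
    by_contra h
    have := hstoch x
    rw [tsum_eq_zero_of_not_summable h] at this
    norm_num at this
  have hpA0 : ∀ x y, 0 ≤ pA x y := by
    intro x y; rw [hpA]; split_ifs with h
    · exact hp x y
    · exact le_rfl
  have hpAsum : ∀ x, Summable (pA x) := by
    intro x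
    by_cases h : x ∈ A
    · exact (hpsum x).congr fun y => by rw [hpA, if_pos h]
    · exact summable_zero.congr fun y => by rw [hpA, if_neg h]
  have hpA1 : ∀ x, ∑' y, pA x y ≤ 1 := by
    intro x
    by_cases h : x ∈ A
    · have : ∑' y, pA x y = ∑' y, p x y := tsum_congr fun y => by rw [hpA, if_pos h]
      rw [this, hstoch x]
    · have : ∑' y, pA x y = 0 := by
        simp only [hpA, if_neg h, tsum_zero]
      rw [this]; exact zero_le_one
  have hk0 : ∀ k x y, (0:ℝ) ≤ kerPow pA k x y := fun k x y => kerPow_nonneg hpA0 k x y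
  have hrow : ∀ k, Summable fun x => kerPow pA k o x := kerPow_row_summable hpA0 hpAsum hpA1 o
  have hGA0 : ∀ x, 0 ≤ GA x := by
    intro x; rw [hGA]; split_ifs with h
    · exact div_nonneg (tsum_nonneg fun k => hk0 k o x) (hm x).le
    · exact le_rfl
  -- part 1
  have hf0 : ∀ kx : ℕ × V, 0 ≤ (if kx.2 ∈ A then kerPow pA kx.1 o kx.2 else 0) := by
    intro kx; split_ifs with h
    · exact hk0 _ o _
    · exact le_rfl
  have hfk : ∀ k : ℕ, Summable fun x : V => if x ∈ A then kerPow pA k o x else 0 := by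
    intro k
    refine Summable.of_nonneg_of_le (fun x => hf0 (k, x)) (fun x => ?_) (hrow k)
    split_ifs with h
    · exact le_rfl
    · exact hk0 k o x
  have hfsum : Summable fun kx : ℕ × V => if kx.2 ∈ A then kerPow pA kx.1 o kx.2 else 0 :=
    (summable_prod_of_nonneg hf0).mpr ⟨hfk, hEsum⟩
  have hpart1 : Etau = ∑' x : V, if x ∈ A then m x * GA x else 0 := by
    have hswap := Summable.tsum_comm (f := fun (k : ℕ) (x : V) => if x ∈ A then kerPow pA k o x else 0)
      hfsum
    rw [hEtau, ← hswap]
    refine tsum_congr fun x => ?_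
    by_cases hx : x ∈ A
    · simp only [hx, if_true]
      rw [hGA x, if_pos hx]
      field_simp
      rw [mul_div_cancel_right₀ _ (hm x).ne']
    · simp only [hx, if_false, tsum_zero]
  refine ⟨hpart1, ?_⟩
  -- part 2
  rw [hpart1]
  refine Summable.tsum_le_of_sum_le hGsum fun F => ?_
  set F' := F.filter (fun x => x ∈ A ∧ 0 < GA x) with hF'
  have hsum_eq : (∑ x ∈ F, if x ∈ A then m x * GA x else 0) = ∑ x ∈ F', m x * GA x := by
    have h2 : ∑ x ∈ F', (if x ∈ A then m x * GA x else 0)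
        = ∑ x ∈ F, (if x ∈ A then m x * GA x else 0) := by
      refine Finset.sum_filter_of_ne fun x hx hne => ?_
      by_cases hxA : x ∈ A
      · refine ⟨hxA, ?_⟩
        rw [if_pos hxA] at hne
        have hGne : GA x ≠ 0 := fun h0 => hne (by rw [h0, mul_zero])
        exact lt_of_le_of_ne (hGA0 x) (Ne.symm hGne)
      · exact absurd (if_neg hxA) (fun h => hne h)
    rw [← h2]
    refine Finset.sum_congr rfl fun x hx => ?_
    exact if_pos (Finset.mem_filter.mp hx).2.1
  rw [hsum_eq]
  -- the auxiliary functions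
  set g : V → ℝ → ℝ :=
    fun x => Set.indicator (Set.Ioc 0 (GA x)) (fun s => m x * (GA x - s) / GA x) with hg
  have hgint : ∀ x, Integrable (g x) := by
    intro x
    exact (((continuous_const.mul (continuous_const.sub continuous_id)).div_const
      (GA x)).integrableOn_Ioc).integrable_indicator measurableSet_Ioc
  have hgval : ∀ x, (0:ℝ) < GA x → ∫ s in Set.Ioi (0:ℝ), g x s = m x * GA x / 2 := by
    intro x hx
    simp only [hg]
    rw [setIntegral_indicator measurableSet_Ioc,
      Set.inter_eq_self_of_subset_right Set.Ioc_subset_Ioi_self,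
      ← intervalIntegral.integral_of_le hx.le]
    rw [intervalIntegral.integral_div, intervalIntegral.integral_const_mul,
      intervalIntegral.integral_sub intervalIntegrable_const
        intervalIntegral.intervalIntegrable_id,
      intervalIntegral.integral_const, integral_id]
    simp only [sub_zero, smul_eq_mul]
    field_simp
    ring
  -- pointwise bound
  have hpt : ∀ s ∈ Set.Ioi (0:ℝ), (∑ x ∈ F', g x s) ≤ u s := by
    intro s hs
    have hs0 : (0:ℝ) < s := hs
    set fs : V × V → ℝ := fun xy =>
      if xy.1 ∈ A ∧ s ≤ GA xy.1 then
        m xy.1 * p xy.1 xy.2 *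
          (if s ≤ GA xy.2 then 1
           else (GA xy.1 - max s (GA xy.2)) / (GA xy.1 - GA xy.2))
      else 0 with hfs
    have hfs0 : ∀ xy, 0 ≤ fs xy := by
      intro xy
      simp only [hfs]
      split_ifs with h1 h2
      · exact mul_nonneg (mul_nonneg (hm _).le (hp _ _)) zero_le_one
      · have hy : GA xy.2 < s := not_le.mp h2
        have hlt : GA xy.2 < GA xy.1 := lt_of_lt_of_le hy h1.2
        rw [max_eq_left hy.le]
        exact mul_nonneg (mul_nonneg (hm _).le (hp _ _))
          (div_nonneg (sub_nonneg.mpr h1.2) (sub_nonneg.mpr hlt.le))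
      · exact le_rfl
    have hrow2 : ∀ x, Summable fun y => fs (x, y) := fun x => (hu_sum s).prod_factor x
    have houter : Summable fun x => ∑' y, fs (x, y) :=
      ((summable_prod_of_nonneg hfs0).mp (hu_sum s)).2
    have hueq : u s = ∑' (x) (y), fs (x, y) := by
      rw [hu s]; exact Summable.tsum_prod (hu_sum s)
    rw [hueq]
    refine le_trans (Finset.sum_le_sum fun x hx => ?_)
      (Summable.sum_le_tsum F' (fun x _ => tsum_nonneg fun y => hfs0 (x, y)) houter)
    have hxA : x ∈ A := (Finset.mem_filter.mp hx).2.1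
    have hxG : 0 < GA x := (Finset.mem_filter.mp hx).2.2
    by_cases hsG : s ≤ GA x
    · have hgx : g x s = m x * (GA x - s) / GA x := by
        simp only [hg]
        exact Set.indicator_of_mem (Set.mem_Ioc.mpr ⟨hs0, hsG⟩) _
      rw [hgx]
      have hcmp : ∀ y, m x * p x y * ((GA x - s) / GA x) ≤ fs (x, y) := by
        intro y
        simp only [hfs]
        rw [if_pos (show x ∈ A ∧ s ≤ GA x from ⟨hxA, hsG⟩)]
        refine mul_le_mul_of_nonneg_left ?_ (mul_nonneg (hm x).le (hp x y))
        split_ifs with h2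
        · rw [div_le_one hxG]; linarith
        · have hy : GA y < s := not_le.mp h2
          rw [max_eq_left hy.le]
          exact div_le_div_of_nonneg_left (sub_nonneg.mpr hsG) (by linarith)
            (by linarith [hGA0 y])
      have heq : m x * (GA x - s) / GA x = ∑' y, m x * p x y * ((GA x - s) / GA x) := by
        rw [tsum_mul_right, tsum_mul_left, hstoch x]
        ring
      rw [heq]
      exact Summable.tsum_le_tsum hcmp (((hpsum x).mul_left (m x)).mul_right _) (hrow2 x)
    · have hgx : g x s = 0 := by
        simp only [hg]
        exact Set.indicator_of_notMem (fun hmem => hsG hmem.2) _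
      rw [hgx]
      exact tsum_nonneg fun y => hfs0 (x, y)
  have hgint' : IntegrableOn (fun s => ∑ x ∈ F', g x s) (Set.Ioi (0:ℝ)) :=
    (integrable_finset_sum F' fun x _ => hgint x).integrableOn
  have hmono : (∫ s in Set.Ioi (0:ℝ), ∑ x ∈ F', g x s) ≤ ∫ s in Set.Ioi (0:ℝ), u s :=
    setIntegral_mono_on hgint' hu_int measurableSet_Ioi hpt
  have hsplit : (∫ s in Set.Ioi (0:ℝ), ∑ x ∈ F', g x s)
      = ∑ x ∈ F', ∫ s in Set.Ioi (0:ℝ), g x s :=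
    integral_finset_sum F' fun x _ => (hgint x).integrableOn
  have hfin : ∑ x ∈ F', m x * GA x = 2 * ∑ x ∈ F', ∫ s in Set.Ioi (0:ℝ), g x s := by
    rw [Finset.mul_sum]
    refine Finset.sum_congr rfl fun x hx => ?_
    rw [hgval x (Finset.mem_filter.mp hx).2.2]
    ring
  rw [hfin, ← hsplit]
  linarith
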